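/- Let ρ = diag(λ_1,...,λ_d) be a diagonal density matrix on ℂ^d and define the selfadjoint operator K on ℂ^d ⊗ ℂ^d by K := Σ_{i=1}^{d} (λ_i·1 − E_{ii}) ⊗ (λ_i·1 − E_{ii}) + (1/2) Σ_{1 ≤ j ≠ k ≤ d} T_{jk} ⊗ T_{jk}, where for j < k, T_{jk} := i(E_{jk} − E_{kj}) and T_{kj} := E_{jk} + E_{kj}. Then for every density matrix σ on ℂ^d: Tr( (σ ⊗ σ) K ) = ‖σ − ρ‖₂², the squared Hilbert–Schmidt (Frobenius) norm of σ − ρ. -/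

import Mathlib

open scoped BigOperators Kronecker
open Matrix
open scoped ComplexOrder

/-- For `j < k`, `T_{jk} := i(E_{jk} − E_{kj})`, and `T_{kj} := E_{jk} + E_{kj}`. -/
noncomputable def TMat {d : ℕ} (a b : Fin d) : Matrix (Fin d) (Fin d) ℂ :=
  if a < b then
    Complex.I • (Matrix.single a b 1 - Matrix.single b a 1)
  else
    Matrix.single b a 1 + Matrix.single a b 1

lemma trace_mul_std {d : ℕ} (σ : Matrix (Fin d) (Fin d) ℂ) (a b : Fin d) :
    (σ * Matrix.single a b 1).trace = σ b a := by
  simp [Matrix.trace, Matrix.mul_apply, Matrix.single, Matrix.diag, ite_and,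
    Finset.sum_ite_eq, Finset.sum_ite_eq']

lemma trace_mul_TMat {d : ℕ} (σ : Matrix (Fin d) (Fin d) ℂ) (j k : Fin d) :
    (σ * TMat j k).trace =
      if j < k then Complex.I * (σ k j - σ j k) else σ k j + σ j k := by
  unfold TMat
  split
  · rw [Matrix.mul_smul, Matrix.trace_smul, Matrix.mul_sub, Matrix.trace_sub,
      trace_mul_std, trace_mul_std]
    simp [smul_eq_mul]
  · rw [Matrix.mul_add, Matrix.trace_add, trace_mul_std, trace_mul_std, add_comm]

lemma trace_mul_lamE {d : ℕ} (σ : Matrix (Fin d) (Fin d) ℂ) (hσtr : σ.trace = 1)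
    (c : ℂ) (i : Fin d) :
    (σ * (c • (1 : Matrix (Fin d) (Fin d) ℂ) - Matrix.single i i 1)).trace
      = c - σ i i := by
  rw [Matrix.mul_sub, Matrix.trace_sub, trace_mul_std, Matrix.mul_smul, Matrix.mul_one,
    Matrix.trace_smul, hσtr, smul_eq_mul, mul_one]

lemma erase_swap {d : ℕ} (f : Fin d → Fin d → ℂ) :
    (∑ j : Fin d, ∑ k ∈ Finset.univ.erase j, f j k)
      = ∑ j : Fin d, ∑ k ∈ Finset.univ.erase j, f k j :=
  Finset.sum_comm' (s := Finset.univ) (t := fun j => Finset.univ.erase j)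
    (t' := Finset.univ) (s' := fun k => Finset.univ.erase k)
    (fun x y => by simp [eq_comm])

lemma pair_sq {d : ℕ} (σ : Matrix (Fin d) (Fin d) ℂ) {j k : Fin d} (h : j ≠ k) :
    (σ * TMat j k).trace * (σ * TMat j k).trace
      + (σ * TMat k j).trace * (σ * TMat k j).trace
      = 4 * (σ j k * σ k j) := by
  rw [trace_mul_TMat, trace_mul_TMat]
  rcases h.lt_or_gt with h' | h'
  · rw [if_pos h', if_neg (not_lt.mpr h'.le)]
    linear_combination (σ k j - σ j k) ^ 2 * Complex.I_sq
  · rw [if_neg (not_lt.mpr h'.le), if_pos h']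
    linear_combination (σ j k - σ k j) ^ 2 * Complex.I_sq

lemma off_sum {d : ℕ} (σ : Matrix (Fin d) (Fin d) ℂ) :
    (∑ j : Fin d, ∑ k ∈ Finset.univ.erase j,
        (σ * TMat j k).trace * (σ * TMat j k).trace)
      = 2 * ∑ j : Fin d, ∑ k ∈ Finset.univ.erase j, σ j k * σ k j := by
  have h2 : (∑ j : Fin d, ∑ k ∈ Finset.univ.erase j,
        (σ * TMat j k).trace * (σ * TMat j k).trace)
      + (∑ j : Fin d, ∑ k ∈ Finset.univ.erase j,
        (σ * TMat j k).trace * (σ * TMat j k).trace)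
      = 4 * ∑ j : Fin d, ∑ k ∈ Finset.univ.erase j, σ j k * σ k j := by
    have hswap : (∑ j : Fin d, ∑ k ∈ Finset.univ.erase j,
          (σ * TMat j k).trace * (σ * TMat j k).trace)
        = ∑ j : Fin d, ∑ k ∈ Finset.univ.erase j,
          (σ * TMat k j).trace * (σ * TMat k j).trace :=
      erase_swap _
    nth_rewrite 1 [hswap]
    rw [← Finset.sum_add_distrib, Finset.mul_sum]
    refine Finset.sum_congr rfl fun j _ => ?_
    rw [← Finset.sum_add_distrib, Finset.mul_sum]
    refine Finset.sum_congr rfl fun k hk => ?_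
    have hjk : j ≠ k := (Finset.ne_of_mem_erase hk).symm
    linear_combination pair_sq σ hjk
  linear_combination h2 / 2

/-- **An unbiased estimator of the squared Hilbert–Schmidt distance to a fixed diagonal
state:** `Tr((σ ⊗ σ) K) = ‖σ − ρ‖₂²` for every density matrix `σ`. -/
theorem stmt18 {d : ℕ} (lam : Fin d → ℝ)
    (hlam : ∀ i, 0 ≤ lam i) (hlamsum : ∑ i, lam i = 1)
    (ρ : Matrix (Fin d) (Fin d) ℂ)
    (hρ : ρ = Matrix.diagonal fun i => (lam i : ℂ))
    (K : Matrix (Fin d × Fin d) (Fin d × Fin d) ℂ)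
    (hK : K =
      (∑ i : Fin d,
        ((lam i : ℂ) • (1 : Matrix (Fin d) (Fin d) ℂ) - Matrix.single i i 1) ⊗ₖ
          ((lam i : ℂ) • (1 : Matrix (Fin d) (Fin d) ℂ) - Matrix.single i i 1)) +
        (2 : ℂ)⁻¹ • ∑ j : Fin d, ∑ k ∈ Finset.univ.erase j, TMat j k ⊗ₖ TMat j k)
    (σ : Matrix (Fin d) (Fin d) ℂ)
    (hσ : σ.PosSemidef) (hσtr : σ.trace = 1) :
    ((σ ⊗ₖ σ) * K).trace = ((σ - ρ)ᴴ * (σ - ρ)).trace := by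
  have hσh : σᴴ = σ := hσ.1
  have hρh : ρᴴ = ρ := by
    rw [hρ]
    ext i j
    by_cases h : i = j
    · subst h; simp [Matrix.conjTranspose_apply, Complex.conj_ofReal]
    · simp [Matrix.conjTranspose_apply, Matrix.diagonal_apply_ne _ h,
        Matrix.diagonal_apply_ne _ (Ne.symm h)]
  have hMh : (σ - ρ)ᴴ = σ - ρ := by rw [Matrix.conjTranspose_sub, hσh, hρh]
  rw [hMh]
  -- LHS
  rw [hK, Matrix.mul_add, Matrix.trace_add, Finset.mul_sum, Matrix.trace_sum,
    Matrix.mul_smul, Matrix.trace_smul, Finset.mul_sum, Matrix.trace_sum]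
  have h1 : (∑ i : Fin d,
      ((σ ⊗ₖ σ) * ((((lam i : ℂ)) • (1 : Matrix (Fin d) (Fin d) ℂ)
          - Matrix.single i i 1) ⊗ₖ
        (((lam i : ℂ)) • (1 : Matrix (Fin d) (Fin d) ℂ)
          - Matrix.single i i 1))).trace)
      = ∑ i : Fin d, ((lam i : ℂ) - σ i i) * ((lam i : ℂ) - σ i i) :=
    Finset.sum_congr rfl fun i _ => by
      rw [← Matrix.mul_kronecker_mul, Matrix.trace_kronecker, trace_mul_lamE σ hσtr]
  rw [h1]
  have h2 : (∑ j : Fin d, ((σ ⊗ₖ σ) * ∑ k ∈ Finset.univ.erase j,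
        TMat j k ⊗ₖ TMat j k).trace)
      = ∑ j : Fin d, ∑ k ∈ Finset.univ.erase j,
          (σ * TMat j k).trace * (σ * TMat j k).trace := by
    refine Finset.sum_congr rfl fun j _ => ?_
    rw [Finset.mul_sum, Matrix.trace_sum]
    refine Finset.sum_congr rfl fun k _ => ?_
    rw [← Matrix.mul_kronecker_mul, Matrix.trace_kronecker]
  rw [h2, off_sum]
  -- RHS
  have hR : ((σ - ρ) * (σ - ρ)).trace
      = ∑ i : Fin d, ((σ i i - (lam i : ℂ)) * (σ i i - (lam i : ℂ))
          + ∑ k ∈ Finset.univ.erase i, σ i k * σ k i) := by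
    rw [Matrix.trace]
    refine Finset.sum_congr rfl fun i _ => ?_
    rw [Matrix.diag_apply, Matrix.mul_apply,
      ← Finset.add_sum_erase _ _ (Finset.mem_univ i)]
    congr 1
    · simp [hρ, Matrix.sub_apply, Matrix.diagonal_apply_eq]
    · refine Finset.sum_congr rfl fun k hk => ?_
      have hki : k ≠ i := Finset.ne_of_mem_erase hk
      rw [hρ]
      simp [Matrix.sub_apply, Matrix.diagonal_apply_ne _ hki.symm,
        Matrix.diagonal_apply_ne _ hki]
  rw [hR, Finset.sum_add_distrib, smul_eq_mul]
  have : (2 : ℂ)⁻¹ * (2 * ∑ j : Fin d, ∑ k ∈ Finset.univ.erase j, σ j k * σ k j)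
      = ∑ j : Fin d, ∑ k ∈ Finset.univ.erase j, σ j k * σ k j := by
    ring
  rw [this]
  congr 1
  exact Finset.sum_congr rfl fun i _ => by ring
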